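/- arXiv:1904.13388 — 3 statements merged into one kernel-verified Lean document; each statement's English description precedes it below -/
import Mathlib

section
/- Let Q be a latin quandle and a ∈ Q. Then Q is principal if and only if Dis(Q) is equal, as a set, to {L_b ∘ L_a⁻¹ : b ∈ Q}. -/
universe u v

/-- A quandle structure on a type `Q`: each left multiplication `L a : b ↦ op a b`
is a bijection (with inverse `invOp a`), the operation is left self-distributive,
and every element is idempotent. -/
structure QuandleStr (Q : Type u) where
  op : Q → Q → Q
  invOp : Q → Q → Q
  inv_op : ∀ a b, invOp a (op a b) = b
  op_inv : ∀ a b, op a (invOp a b) = b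
  self_distrib : ∀ a b c, op a (op b c) = op (op a b) (op a c)
  op_self : ∀ a, op a a = a

namespace QuandleStr

variable {Q : Type u} (S : QuandleStr Q)

/-- Left multiplication as a permutation of `Q`. -/
def L (a : Q) : Equiv.Perm Q where
  toFun := S.op a
  invFun := S.invOp a
  left_inv := S.inv_op a
  right_inv := S.op_inv a

/-- The left multiplication group `LMlt(Q)`. -/
def LMlt : Subgroup (Equiv.Perm Q) := Subgroup.closure (Set.range S.L)

/-- The displacement group `Dis(Q)`, generated by `L a * (L b)⁻¹`. -/
def Dis : Subgroup (Equiv.Perm Q) :=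
  Subgroup.closure { g : Equiv.Perm Q | ∃ a b : Q, g = S.L a * (S.L b)⁻¹ }

/-- `Q` is connected if `Dis(Q)` acts transitively. -/
def IsConnected : Prop := ∀ a b : Q, ∃ g ∈ S.Dis, g a = b

/-- `Q` is semiregular if the stabilizer in `Dis(Q)` of every point is trivial. -/
def IsSemiregular : Prop := ∀ g ∈ S.Dis, ∀ x : Q, g x = x → g = 1

/-- `Q` is faithful if `a ↦ L a` is injective. -/
def IsFaithful : Prop := ∀ a b : Q, (∀ c : Q, S.op a c = S.op b c) → a = b

/-- `Q` is latin if every right multiplication is bijective. -/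
def IsLatin : Prop := ∀ a : Q, Function.Bijective (fun b => S.op b a)

/-- `Q` is a crossed set if `a*b = b` implies `b*a = a`. -/
def IsCrossedSet : Prop := ∀ a b : Q, S.op a b = b → S.op b a = a

/-- A subquandle: a nonempty subset closed under the operation and left division. -/
def IsSubquandle (A : Set Q) : Prop :=
  A.Nonempty ∧ (∀ a ∈ A, ∀ b ∈ A, S.op a b ∈ A) ∧ (∀ a ∈ A, ∀ b ∈ A, S.invOp a b ∈ A)

/-- The automorphism group of the quandle, as a subgroup of `Equiv.Perm Q`. -/
def autGroup : Subgroup (Equiv.Perm Q) where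
  carrier := { h : Equiv.Perm Q | ∀ a b : Q, h (S.op a b) = S.op (h a) (h b) }
  one_mem' := by intro a b; rfl
  mul_mem' := by
    intro g h hg hh a b
    show g (h (S.op a b)) = S.op (g (h a)) (g (h b))
    rw [hh, hg]
  inv_mem' := by
    intro g hg a b
    apply g.injective
    rw [hg]
    simp

/-- `Q` is doubly homogeneous if `Aut(Q)` acts 2-transitively. -/
def IsDoublyHomogeneous : Prop :=
  ∀ a b c d : Q, a ≠ b → c ≠ d → ∃ h ∈ S.autGroup, h a = c ∧ h b = d

/-- The restriction of the quandle structure to a subset closed under both operations. -/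
def restrict (A : Set Q) (h1 : ∀ a ∈ A, ∀ b ∈ A, S.op a b ∈ A)
    (h2 : ∀ a ∈ A, ∀ b ∈ A, S.invOp a b ∈ A) : QuandleStr A where
  op a b := ⟨S.op a b, h1 a a.2 b b.2⟩
  invOp a b := ⟨S.invOp a b, h2 a a.2 b b.2⟩
  inv_op a b := Subtype.ext (S.inv_op a b)
  op_inv a b := Subtype.ext (S.op_inv a b)
  self_distrib a b c := Subtype.ext (S.self_distrib a b c)
  op_self a := Subtype.ext (S.op_self a)

/-- The stabilizer of a point in the displacement group, as a set of permutations. -/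
def disStab (x : Q) : Set (Equiv.Perm Q) := { g : Equiv.Perm Q | g ∈ S.Dis ∧ g x = x }

/-- The class of `a` under the relation `σ_Q`: elements with the same stabilizer in `Dis(Q)`. -/
def sigmaClass (a : Q) : Set Q := { b : Q | S.disStab b = S.disStab a }

/-- A quandle is strictly simple if it has at least two elements and no proper subquandle. -/
def IsStrictlySimple : Prop :=
  (∃ a b : Q, a ≠ b) ∧
    ∀ A : Set Q, S.IsSubquandle A → (∀ a ∈ A, ∀ b ∈ A, a = b) ∨ A = Set.univ

/-- A subset which is a strictly simple subquandle (with the restricted operation). -/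
def IsStrictlySimpleSub (A : Set Q) : Prop :=
  S.IsSubquandle A ∧ (∃ a ∈ A, ∃ b ∈ A, a ≠ b) ∧
    ∀ B : Set Q, B ⊆ A → S.IsSubquandle B → (∀ x ∈ B, ∀ y ∈ B, x = y) ∨ B = A

/-- A congruence of a quandle. -/
structure IsCongruence (r : Q → Q → Prop) : Prop where
  refl : ∀ a, r a a
  symm : ∀ {a b}, r a b → r b a
  trans : ∀ {a b c}, r a b → r b c → r a c
  op_compat : ∀ {a b c d}, r a b → r c d → r (S.op a c) (S.op b d)
  invOp_compat : ∀ {a b c d}, r a b → r c d → r (S.invOp a c) (S.invOp b d)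

/-- A quandle is simple if it has at least two elements and its only congruences are
the equality relation and the all relation. -/
def IsSimple : Prop :=
  (∃ a b : Q, a ≠ b) ∧
    ∀ r : Q → Q → Prop, S.IsCongruence r → (∀ a b, r a b ↔ a = b) ∨ (∀ a b, r a b)

end QuandleStr

/-- The product of a family of quandles, with componentwise operation. -/
def piQuandle {I : Type u} {Q : I → Type v} (S : ∀ i, QuandleStr (Q i)) :
    QuandleStr (∀ i, Q i) where
  op a b := fun i => (S i).op (a i) (b i)
  invOp a b := fun i => (S i).invOp (a i) (b i)
  inv_op a b := funext fun i => (S i).inv_op (a i) (b i)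
  op_inv a b := funext fun i => (S i).op_inv (a i) (b i)
  self_distrib a b c := funext fun i => (S i).self_distrib (a i) (b i) (c i)
  op_self a := funext fun i => (S i).op_self (a i)

/-- The principal quandle `Q_Hom(G, f)` over a group `G` with automorphism `f`:
the underlying set is `G` with `a * b = a · f(a⁻¹ b)`. -/
def principalQuandle {G : Type u} [Group G] (f : G ≃* G) : QuandleStr G where
  op a b := a * f (a⁻¹ * b)
  invOp a b := a * f.symm (a⁻¹ * b)
  inv_op a b := by simp
  op_inv a b := by simp
  self_distrib a b c := by
    simp only [map_mul, map_inv, mul_inv_rev, mul_assoc, inv_mul_cancel_left,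
      mul_inv_cancel_left, inv_inv]
  op_self a := by simp

/-- The affine quandle `Aff(A, f)` over an abelian group `A` with automorphism `f`:
the underlying set is `A` with `a * b = a - f a + f b`. -/
def affineQuandle {A : Type u} [AddCommGroup A] (f : A ≃+ A) : QuandleStr A where
  op a b := a - f a + f b
  invOp a b := f.symm (b - a + f a)
  inv_op a b := by
    have h : (a - f a + f b) - a + f a = f b := by abel
    rw [h, f.symm_apply_apply]
  op_inv a b := by
    rw [f.apply_symm_apply]
    abel
  self_distrib a b c := by
    simp only [map_add, map_sub]
    abel
  op_self a := by
    rw [sub_add_cancel]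

/-- A witness that a quandle is principal: a group `G`, an automorphism `f`, and a
quandle isomorphism with `Q_Hom(G, f)`. -/
structure PrincipalWitness {Q : Type u} (S : QuandleStr Q) : Type (u + 1) where
  G : Type u
  [grp : Group G]
  f : G ≃* G
  e : Q ≃ G
  hop : ∀ a b : Q, e (S.op a b) = (principalQuandle f).op (e a) (e b)

/-- A quandle is principal if it is isomorphic to some `Q_Hom(G, f)`. -/
def IsPrincipal {Q : Type u} (S : QuandleStr Q) : Prop := Nonempty (PrincipalWitness S)

namespace QuandleStr

variable {Q : Type u} (S : QuandleStr Q)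

@[simp] lemma L_apply' (b c : Q) : S.L b c = S.op b c := rfl

@[simp] lemma L_inv_apply' (b c : Q) : (S.L b)⁻¹ c = S.invOp b c := rfl

lemma invOp_self' (a : Q) : S.invOp a a = a := by
  have h := S.inv_op a a
  rwa [S.op_self] at h

lemma L_conj' (a b : Q) : S.L a * S.L b * (S.L a)⁻¹ = S.L (S.op a b) := by
  ext c
  show S.op a (S.op b (S.invOp a c)) = S.op (S.op a b) c
  rw [S.self_distrib, S.op_inv]

lemma gen_mem_dis (b c : Q) : S.L b * (S.L c)⁻¹ ∈ S.Dis :=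
  Subgroup.subset_closure ⟨b, c, rfl⟩

lemma L_mul_Linv_apply_self (a b : Q) : (S.L b * (S.L a)⁻¹) a = S.op b a := by
  show S.op b (S.invOp a a) = S.op b a
  rw [S.invOp_self']

end QuandleStr

/-- Left translation, transported along an equivalence, as a homomorphism into `Perm`. -/
def tauHom {Q G : Type u} [Group G] (e : Q ≃ G) : G →* Equiv.Perm Q where
  toFun g := (e.trans (Equiv.mulLeft g)).trans e.symm
  map_one' := by ext x; simp
  map_mul' g h := by ext x; simp [mul_assoc]

lemma tauHom_apply {Q G : Type u} [Group G] (e : Q ≃ G) (g : G) (x : Q) :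
    tauHom e g x = e.symm (g * e x) := rfl

namespace QuandleStr

variable {Q : Type u} (S : QuandleStr Q)

/-- Right translation by `a` as an equivalence (latin). -/
noncomputable def rho (hl : S.IsLatin) (a : Q) : Q ≃ Q := Equiv.ofBijective (fun b => S.op b a) (hl a)

lemma back_evalInj (hl : S.IsLatin) (a : Q) (hD : ∀ g : Equiv.Perm Q, g ∈ S.Dis → ∃ b, g = S.L b * (S.L a)⁻¹)
    (g₁ g₂ : S.Dis) (hg : (g₁ : Equiv.Perm Q) a = (g₂ : Equiv.Perm Q) a) : g₁ = g₂ := by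
  obtain ⟨b₁, h₁⟩ := hD g₁ g₁.2
  obtain ⟨b₂, h₂⟩ := hD g₂ g₂.2
  rw [h₁, h₂, S.L_mul_Linv_apply_self, S.L_mul_Linv_apply_self] at hg
  have hb : b₁ = b₂ := (hl a).1 hg
  apply Subtype.ext
  rw [h₁, h₂, hb]

/-- The equivalence `Q ≃ Dis(Q)` when `Dis(Q) = {L b * (L a)⁻¹}`. -/
noncomputable def backE (hl : S.IsLatin) (a : Q) (hD : ∀ g : Equiv.Perm Q, g ∈ S.Dis → ∃ b, g = S.L b * (S.L a)⁻¹) :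
    Q ≃ S.Dis where
  toFun x := ⟨S.L ((S.rho hl a).symm x) * (S.L a)⁻¹, S.gen_mem_dis _ _⟩
  invFun g := (g : Equiv.Perm Q) a
  left_inv x := by
    show (S.L ((S.rho hl a).symm x) * (S.L a)⁻¹) a = x
    rw [S.L_mul_Linv_apply_self]
    exact (S.rho hl a).apply_symm_apply x
  right_inv g := by
    apply S.back_evalInj hl a hD
    show (S.L ((S.rho hl a).symm ((g : Equiv.Perm Q) a)) * (S.L a)⁻¹) a = (g : Equiv.Perm Q) a
    rw [S.L_mul_Linv_apply_self]
    exact (S.rho hl a).apply_symm_apply _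

lemma backE_coe (hl : S.IsLatin) (a : Q) (hD : ∀ g : Equiv.Perm Q, g ∈ S.Dis → ∃ b, g = S.L b * (S.L a)⁻¹) (z : Q) :
    ((S.backE hl a hD z : S.Dis) : Equiv.Perm Q) = S.L ((S.rho hl a).symm z) * (S.L a)⁻¹ := rfl

lemma backE_eval (hl : S.IsLatin) (a : Q) (hD : ∀ g : Equiv.Perm Q, g ∈ S.Dis → ∃ b, g = S.L b * (S.L a)⁻¹) (z : Q) :
    ((S.backE hl a hD z : S.Dis) : Equiv.Perm Q) a = z := (S.backE hl a hD).left_inv z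

/-- Conjugation by `L a` as an automorphism of `Dis(Q)`. -/
noncomputable def backF (hl : S.IsLatin) (a : Q) (hD : ∀ g : Equiv.Perm Q, g ∈ S.Dis → ∃ b, g = S.L b * (S.L a)⁻¹) :
    S.Dis ≃* S.Dis where
  toFun g := ⟨S.L a * g * (S.L a)⁻¹, by
    obtain ⟨b, hb⟩ := hD g g.2
    have h2 : S.L a * (g : Equiv.Perm Q) * (S.L a)⁻¹ = S.L (S.op a b) * (S.L a)⁻¹ := by
      rw [hb, ← S.L_conj']; group
    rw [h2]
    exact S.gen_mem_dis _ _⟩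
  invFun g := ⟨(S.L a)⁻¹ * g * S.L a, by
    obtain ⟨b, hb⟩ := hD g g.2
    have h3 : S.L a * S.L (S.invOp a b) * (S.L a)⁻¹ = S.L b := by
      rw [S.L_conj', S.op_inv]
    have h2 : (S.L a)⁻¹ * (g : Equiv.Perm Q) * S.L a = S.L (S.invOp a b) * (S.L a)⁻¹ := by
      rw [hb, ← h3]; group
    rw [h2]
    exact S.gen_mem_dis _ _⟩
  left_inv g := by
    apply Subtype.ext
    show (S.L a)⁻¹ * (S.L a * (g : Equiv.Perm Q) * (S.L a)⁻¹) * S.L a = (g : Equiv.Perm Q)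
    group
  right_inv g := by
    apply Subtype.ext
    show S.L a * ((S.L a)⁻¹ * (g : Equiv.Perm Q) * S.L a) * (S.L a)⁻¹ = (g : Equiv.Perm Q)
    group
  map_mul' g k := by
    apply Subtype.ext
    show S.L a * ((g : Equiv.Perm Q) * (k : Equiv.Perm Q)) * (S.L a)⁻¹ =
      (S.L a * (g : Equiv.Perm Q) * (S.L a)⁻¹) * (S.L a * (k : Equiv.Perm Q) * (S.L a)⁻¹)
    group

lemma backF_coe (hl : S.IsLatin) (a : Q) (hD : ∀ g : Equiv.Perm Q, g ∈ S.Dis → ∃ b, g = S.L b * (S.L a)⁻¹)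
    (k : S.Dis) :
    ((S.backF hl a hD k : S.Dis) : Equiv.Perm Q) = S.L a * (k : Equiv.Perm Q) * (S.L a)⁻¹ := rfl

lemma back_hop (hl : S.IsLatin) (a : Q) (hD : ∀ g : Equiv.Perm Q, g ∈ S.Dis → ∃ b, g = S.L b * (S.L a)⁻¹) (x y : Q) :
    S.backE hl a hD (S.op x y) =
      (principalQuandle (S.backF hl a hD)).op (S.backE hl a hD x) (S.backE hl a hD y) := by
  apply S.back_evalInj hl a hD
  rw [S.backE_eval]
  show S.op x y = ((S.backE hl a hD x * S.backF hl a hD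
      ((S.backE hl a hD x)⁻¹ * S.backE hl a hD y) : S.Dis) : Equiv.Perm Q) a
  rw [Subgroup.coe_mul, S.backF_coe, Subgroup.coe_mul, Subgroup.coe_inv,
    S.backE_coe, S.backE_coe]
  have hbx : S.op ((S.rho hl a).symm x) a = x := (S.rho hl a).apply_symm_apply x
  have hby : S.op ((S.rho hl a).symm y) a = y := (S.rho hl a).apply_symm_apply y
  simp only [mul_inv_rev, inv_inv, Equiv.Perm.mul_apply, L_apply', L_inv_apply',
    S.invOp_self', S.inv_op, S.op_inv]
  rw [hby, S.self_distrib, hbx, S.op_inv]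

end QuandleStr

/-- A latin quandle `Q` is principal if and only if
`Dis(Q) = {L b ∘ (L a)⁻¹ : b ∈ Q}` as a set, for the given `a ∈ Q`. -/
theorem statement4 {Q : Type u} (S : QuandleStr Q) (hl : S.IsLatin) (a : Q) :
    IsPrincipal S ↔
      (S.Dis : Set (Equiv.Perm Q)) = { g : Equiv.Perm Q | ∃ b : Q, g = S.L b * (S.L a)⁻¹ } := by
  constructor
  · rintro ⟨W⟩
    obtain ⟨G, f, e, hop⟩ := W
    have hop' : ∀ u w : Q, e (S.op u w) = e u * f (e u)⁻¹ * f (e w) := by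
      intro u w
      rw [hop]
      show e u * f ((e u)⁻¹ * e w) = e u * f (e u)⁻¹ * f (e w)
      rw [map_mul, map_inv, mul_assoc]
    have key : ∀ x y : Q, S.L x * (S.L y)⁻¹ = tauHom e (e (S.op x y) * (e y)⁻¹) := by
      intro x y
      ext z
      show S.op x (S.invOp y z) = e.symm (e (S.op x y) * (e y)⁻¹ * e z)
      rw [Equiv.eq_symm_apply, hop' x (S.invOp y z), hop' x y]
      have h1 : e z = e y * f (e y)⁻¹ * f (e (S.invOp y z)) := by
        have h2 := hop' y (S.invOp y z)
        rwa [S.op_inv] at h2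
      rw [h1]
      simp only [mul_assoc, inv_mul_cancel_left, mul_inv_cancel_left]
      have hc : f (e y) * f ((e y)⁻¹) = 1 := by
        rw [← map_mul, mul_inv_cancel, map_one]
      rw [← mul_assoc (f (e y)), hc, one_mul]
    have surj : ∀ g : G, ∃ b : Q, e (S.op b a) * (e a)⁻¹ = g := by
      intro g
      obtain ⟨b, hb⟩ := (hl a).2 (e.symm (g * e a))
      refine ⟨b, ?_⟩
      rw [show S.op b a = e.symm (g * e a) from hb, Equiv.apply_symm_apply,
        mul_inv_cancel_right]
    have hle : S.Dis ≤ (tauHom e).range := by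
      refine (Subgroup.closure_le _).mpr ?_
      rintro _ ⟨x, y, rfl⟩
      exact ⟨e (S.op x y) * (e y)⁻¹, (key x y).symm⟩
    apply subset_antisymm
    · intro g hg
      obtain ⟨c, hc⟩ := hle hg
      obtain ⟨b, hb⟩ := surj c
      exact ⟨b, by rw [key b a, hb, hc]⟩
    · rintro g ⟨b, rfl⟩
      exact S.gen_mem_dis b a
  · intro h
    have hD : ∀ g : Equiv.Perm Q, g ∈ S.Dis → ∃ b, g = S.L b * (S.L a)⁻¹ := by
      intro g hg
      have hmem : g ∈ (S.Dis : Set (Equiv.Perm Q)) := hg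
      rw [h] at hmem
      exact hmem
    exact ⟨⟨↥S.Dis, S.backF hl a hD, S.backE hl a hD, S.back_hop hl a hD⟩⟩
end

section
/- Let Q be a finite doubly homogeneous quandle. Then either a*b = b for all a,b ∈ Q (Q is a projection quandle), or Q is latin. -/
universe u v

/-- A finite doubly homogeneous quandle is either a projection quandle
or latin. -/
theorem statement14 {Q : Type u} [Finite Q] (S : QuandleStr Q)
    (hdh : S.IsDoublyHomogeneous) :
    (∀ a b : Q, S.op a b = b) ∨ S.IsLatin := by
  by_cases hproj : ∀ a b : Q, S.op a b = b
  · exact Or.inl hproj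
  · right
    push_neg at hproj
    obtain ⟨a, b, hab⟩ := hproj
    have hane : a ≠ b := by rintro rfl; exact hab (S.op_self a)
    -- key: x ≠ y → x * y ≠ y
    have key : ∀ x y : Q, x ≠ y → S.op x y ≠ y := by
      intro x y hxy hop
      obtain ⟨h, hh, hha, hhb⟩ := hdh a b x y hane hxy
      apply hab
      have : h (S.op a b) = h b := by rw [hh a b, hha, hhb, hop]
      exact h.injective this
    intro c
    rw [← Finite.surjective_iff_bijective]
    intro d
    by_cases hdc : d = c
    · exact ⟨c, by simp only []; rw [S.op_self, hdc]⟩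
    · -- find x ≠ c
      obtain ⟨x, hxc⟩ : ∃ x : Q, x ≠ c := by
        by_cases h : a = c
        · exact ⟨b, by rw [← h]; exact hane.symm⟩
        · exact ⟨a, h⟩
      have hec : S.op x c ≠ c := key x c hxc
      obtain ⟨h, hh, he, hc⟩ := hdh (S.op x c) c d c hec hdc
      refine ⟨h x, ?_⟩
      show S.op (h x) c = d
      rw [← hc, ← hh, he]
end

section
/- Let Q be a finite latin principal quandle and let p be a prime dividing |Q|. Then Q has a strictly simple subquandle whose cardinality is a power of p. -/
universe u v

section Statement17Aux

open scoped Pointwise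

variable {G : Type u} [Group G] [Finite G] (f : G ≃* G)

lemma pq_op (a b : G) : (principalQuandle f).op a b = a * f (a⁻¹ * b) := rfl

lemma pq_invOp (a b : G) : (principalQuandle f).invOp a b = a * f.symm (a⁻¹ * b) := rfl

lemma fpf_of_latin (hl : (principalQuandle f).IsLatin) : ∀ g : G, f g = g → g = 1 := by
  intro g hg
  have h1 := (hl 1).1
  have h2 : (fun b => (principalQuandle f).op b 1) g
      = (fun b => (principalQuandle f).op b 1) 1 := by
    simp [pq_op, hg]
  exact h1 h2

lemma theta_surj (hl : (principalQuandle f).IsLatin) :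
    Function.Surjective (fun g : G => g⁻¹ * f g) := by
  have hfpf := fpf_of_latin f hl
  have hinj : Function.Injective (fun g : G => g⁻¹ * f g) := by
    intro a b hab
    dsimp only at hab
    have h3 : f a * (f b)⁻¹ = a * b⁻¹ := by
      have h4 := congrArg (fun z => a * z * (f b)⁻¹) hab
      simpa [mul_assoc] using h4
    have h2 : f (a * b⁻¹) = a * b⁻¹ := by
      rw [map_mul, map_inv, h3]
    have h5 := hfpf _ h2
    rw [mul_inv_eq_one] at h5
    exact h5
  exact Finite.surjective_of_injective hinj

lemma psi_inj (hl : (principalQuandle f).IsLatin) :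
    Function.Injective (fun g : G => g * (f g)⁻¹) := by
  have hfpf := fpf_of_latin f hl
  intro a b hab
  dsimp only at hab
  have h3 : b⁻¹ * a = (f b)⁻¹ * f a := by
    have h4 := congrArg (fun z => b⁻¹ * z * f a) hab
    simpa [mul_assoc] using h4
  have h2 : f (b⁻¹ * a) = b⁻¹ * a := by
    rw [map_mul, map_inv, ← h3]
  have h5 := hfpf _ h2
  rw [inv_mul_eq_one] at h5
  exact h5.symm

lemma exists_invariant_min_subgroup (hl : (principalQuandle f).IsLatin)
    (p : ℕ) (hp : p.Prime) (hdvd : p ∣ Nat.card G) :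
    ∃ H : Subgroup G, IsPGroup p H ∧ H ≠ ⊥ ∧ (∀ x, x ∈ H ↔ f x ∈ H) ∧
      ∀ K : Subgroup G, K ≤ H → K ≠ ⊥ → (∀ x, x ∈ K ↔ f x ∈ K) → K = H := by
  haveI : Fact p.Prime := ⟨hp⟩
  obtain ⟨P⟩ : Nonempty (Sylow p G) := inferInstance
  obtain ⟨g, hg⟩ := MulAction.exists_smul_eq G ((f : MulAut G) • P) P
  obtain ⟨h, hh⟩ := theta_surj f hl g
  dsimp only at hh
  subst hh
  rw [Sylow.smul_def] at hg
  set Q : Sylow p G := MulAut.conj h • P with hQdef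
  have hcomm : (f : MulAut G) * MulAut.conj h = MulAut.conj (f h) * (f : MulAut G) := by
    ext x
    simp [MulAut.conj_apply, map_mul, map_inv]
  have hg' : (f : MulAut G) • P = (MulAut.conj (h⁻¹ * f h))⁻¹ • P := by
    rw [eq_inv_smul_iff]
    exact hg
  have hscal : MulAut.conj (f h) * (MulAut.conj (h⁻¹ * f h))⁻¹ = MulAut.conj h := by
    rw [← map_inv, ← map_mul]
    congr 1
    simp [mul_inv_rev]
  have key : (f : MulAut G) • Q = Q := by
    rw [hQdef, smul_smul, hcomm, mul_smul, hg', smul_smul, hscal]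
  have keysub : (f : MulAut G) • (Q : Subgroup G) = (Q : Subgroup G) := by
    rw [← Sylow.pointwise_smul_def, key]
  have hQinv : ∀ x : G, x ∈ (Q : Subgroup G) ↔ f x ∈ (Q : Subgroup G) := by
    intro x
    conv_rhs => rw [← keysub]
    rw [show f x = (f : MulAut G) • x from rfl]
    exact (Subgroup.smul_mem_pointwise_smul_iff).symm
  have hQbot : (Q : Subgroup G) ≠ ⊥ := Sylow.ne_bot_of_dvd_card Q hdvd
  have hQp : IsPGroup p (Q : Subgroup G) := Q.2
  haveI : Finite (Subgroup G) :=
    Finite.of_injective (fun K : Subgroup G => (K : Set G)) SetLike.coe_injective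
  have hwf : WellFounded ((· < ·) : Subgroup G → Subgroup G → Prop) :=
    (Finite.to_wellFoundedLT (α := Subgroup G)).wf
  obtain ⟨H, hH, hmin⟩ := hwf.has_min
    {K : Subgroup G | K ≤ (Q : Subgroup G) ∧ K ≠ ⊥ ∧ ∀ x, x ∈ K ↔ f x ∈ K}
    ⟨(Q : Subgroup G), le_rfl, hQbot, hQinv⟩
  refine ⟨H, hQp.to_le hH.1, hH.2.1, hH.2.2, ?_⟩
  intro K hKH hKbot hKinv
  by_contra hne
  exact hmin K ⟨hKH.trans hH.1, hKbot, hKinv⟩ (lt_of_le_of_ne hKH hne)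

lemma subq_of_subgroup (H : Subgroup G) (hinv : ∀ x, x ∈ H ↔ f x ∈ H) :
    (principalQuandle f).IsSubquandle (H : Set G) := by
  refine ⟨⟨1, H.one_mem⟩, ?_, ?_⟩
  · intro a ha b hb
    rw [pq_op]
    exact mul_mem ha ((hinv _).mp (mul_mem (inv_mem ha) hb))
  · intro a ha b hb
    rw [pq_invOp]
    refine mul_mem ha ((hinv _).mpr ?_)
    rw [MulEquiv.apply_symm_apply]
    exact mul_mem (inv_mem ha) hb

lemma key_translate (hl : (principalQuandle f).IsLatin) (H : Subgroup G)
    (hmin : ∀ K : Subgroup G, K ≤ H → K ≠ ⊥ → (∀ x, x ∈ K ↔ f x ∈ K) → K = H)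
    (B : Set G) (hBH : B ⊆ (H : Set G)) (hB : (principalQuandle f).IsSubquandle B)
    (c b : G) (hc : c ∈ B) (hb : b ∈ B) (hne : c ≠ b) : B = (H : Set G) := by
  have hfpf := fpf_of_latin f hl
  set D : Set G := (fun x => c⁻¹ * x) '' B with hDdef
  have hDmem : ∀ x, x ∈ D ↔ c * x ∈ B := by
    intro x
    constructor
    · rintro ⟨y, hy, rfl⟩
      rwa [mul_inv_cancel_left]
    · intro hx
      exact ⟨c * x, hx, by simp⟩
  have hD1 : (1 : G) ∈ D := by rw [hDmem]; simpa using hc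
  have hDle : D ⊆ (H : Set G) := by
    rintro _ ⟨x, hx, rfl⟩
    exact mul_mem (inv_mem (hBH hc)) (hBH hx)
  have hDop : ∀ x ∈ D, ∀ y ∈ D, x * f (x⁻¹ * y) ∈ D := by
    intro x hx y hy
    rw [hDmem] at hx hy ⊢
    have h1 := hB.2.1 _ hx _ hy
    rw [pq_op] at h1
    have heq : c * x * f ((c * x)⁻¹ * (c * y)) = c * (x * f (x⁻¹ * y)) := by
      simp [mul_assoc]
    rwa [heq] at h1
  have hDinvOp : ∀ x ∈ D, ∀ y ∈ D, x * f.symm (x⁻¹ * y) ∈ D := by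
    intro x hx y hy
    rw [hDmem] at hx hy ⊢
    have h1 := hB.2.2 _ hx _ hy
    rw [pq_invOp] at h1
    have heq : c * x * f.symm ((c * x)⁻¹ * (c * y)) = c * (x * f.symm (x⁻¹ * y)) := by
      simp [mul_assoc]
    rwa [heq] at h1
  have hDf : ∀ x ∈ D, f x ∈ D := by
    intro x hx
    have h1 := hDop 1 hD1 x hx
    simpa using h1
  have hDfs : ∀ x ∈ D, f.symm x ∈ D := by
    intro x hx
    have h1 := hDinvOp 1 hD1 x hx
    simpa using h1
  have hDpsi : ∀ x ∈ D, x * (f x)⁻¹ ∈ D := by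
    intro x hx
    have h1 := hDop x hx 1 hD1
    simpa [map_inv] using h1
  have hDfin : D.Finite := Set.toFinite D
  have hfBij : Set.BijOn f D D :=
    (hDfin.injOn_iff_bijOn_of_mapsTo (fun x hx => hDf x hx)).mp f.injective.injOn
  have hpsiBij : Set.BijOn (fun x : G => x * (f x)⁻¹) D D :=
    (hDfin.injOn_iff_bijOn_of_mapsTo (fun x hx => hDpsi x hx)).mp (psi_inj f hl).injOn
  have hDmul : ∀ x ∈ D, ∀ y ∈ D, x * y ∈ D := by
    intro x hx y hy
    obtain ⟨a, haD, ha⟩ := hpsiBij.surjOn hx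
    obtain ⟨d, hdD, hd⟩ := hfBij.surjOn hy
    have h1 := hDop a haD d hdD
    have heq : a * f (a⁻¹ * d) = x * y := by
      rw [← ha, ← hd]
      dsimp only
      rw [map_mul, map_inv, mul_assoc]
    rwa [heq] at h1
  have hDinv : ∀ x ∈ D, x⁻¹ ∈ D := by
    intro x hx
    have hpow : ∀ n : ℕ, x ^ (n + 1) ∈ D := by
      intro n
      induction n with
      | zero => simpa using hx
      | succ k ih =>
        have h1 := hDmul _ ih _ hx
        rwa [← pow_succ] at h1
    rcases Nat.lt_or_ge (orderOf x) 2 with hlt | hge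
    · have hpos : 0 < orderOf x := orderOf_pos x
      have h1 : orderOf x = 1 := by omega
      have h2 : x = 1 := orderOf_eq_one_iff.mp h1
      rw [h2]
      simpa using hD1
    · have h1 : x ^ (orderOf x - 2 + 1) * x = 1 := by
        rw [← pow_succ]
        have h2 : orderOf x - 2 + 1 + 1 = orderOf x := by omega
        rw [h2, pow_orderOf_eq_one]
      have h2 : x⁻¹ = x ^ (orderOf x - 2 + 1) := (eq_inv_of_mul_eq_one_left h1).symm
      rw [h2]
      exact hpow _
  set K : Subgroup G :=
    { carrier := D
      one_mem' := hD1
      mul_mem' := fun {a} {d} ha hd => hDmul a ha d hd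
      inv_mem' := fun {a} ha => hDinv a ha } with hKdef
  have hKH : K ≤ H := hDle
  have hKbot : K ≠ ⊥ := by
    intro hKeq
    have h1 : c⁻¹ * b ∈ K := by
      show c⁻¹ * b ∈ D
      rw [hDmem, mul_inv_cancel_left]
      exact hb
    rw [hKeq, Subgroup.mem_bot] at h1
    apply hne
    rw [inv_mul_eq_one] at h1
    exact h1
  have hKinv : ∀ x, x ∈ K ↔ f x ∈ K := by
    intro x
    constructor
    · exact fun hx => hDf x hx
    · intro hx
      have h1 := hDfs _ hx
      rwa [MulEquiv.symm_apply_apply] at h1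
  have hKeq : K = H := hmin K hKH hKbot hKinv
  have hcH : c ∈ H := hBH hc
  ext x
  constructor
  · intro hx
    exact hBH hx
  · intro hx
    have h1 : c⁻¹ * x ∈ K := by
      rw [hKeq]
      exact mul_mem (inv_mem hcH) hx
    have h2 : c⁻¹ * x ∈ D := h1
    rw [hDmem, mul_inv_cancel_left] at h2
    exact h2

lemma main_G (hl : (principalQuandle f).IsLatin) (p : ℕ) (hp : p.Prime)
    (hdvd : p ∣ Nat.card G) :
    ∃ A : Set G, (principalQuandle f).IsStrictlySimpleSub A ∧
      ∃ k : ℕ, Nat.card A = p ^ k := by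
  haveI : Fact p.Prime := ⟨hp⟩
  obtain ⟨H, hHp, hHbot, hHinv, hHmin⟩ := exists_invariant_min_subgroup f hl p hp hdvd
  refine ⟨(H : Set G), ⟨subq_of_subgroup f H hHinv, ?_, ?_⟩, ?_⟩
  · obtain ⟨⟨a, haH⟩, ha1⟩ := Subgroup.ne_bot_iff_exists_ne_one.mp hHbot
    refine ⟨a, haH, 1, H.one_mem, ?_⟩
    intro h
    exact ha1 (Subtype.ext h)
  · intro B hBsub hB
    by_cases hall : ∀ x ∈ B, ∀ y ∈ B, x = y
    · exact Or.inl hall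
    · right
      push_neg at hall
      obtain ⟨c, hc, b, hb, hne⟩ := hall
      exact key_translate f hl H hHmin B hBsub hB c b hc hb hne
  · obtain ⟨k, hk⟩ := hHp.exists_card_eq
    exact ⟨k, hk⟩

end Statement17Aux
/-- A finite latin principal quandle has, for every prime `p` dividing
its cardinality, a strictly simple subquandle of cardinality a power of `p`. -/
theorem statement17 {Q : Type u} [Finite Q] (S : QuandleStr Q) (hl : S.IsLatin)
    (hpr : IsPrincipal S) (p : ℕ) (hp : p.Prime) (hdvd : p ∣ Nat.card Q) :
    ∃ A : Set Q, S.IsStrictlySimpleSub A ∧ ∃ k : ℕ, Nat.card A = p ^ k := by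
  obtain ⟨W⟩ := hpr
  letI : Group W.G := W.grp
  haveI : Finite W.G := Finite.of_equiv Q W.e
  have hop := W.hop
  have hinvOp : ∀ a b : Q,
      W.e (S.invOp a b) = (principalQuandle W.f).invOp (W.e a) (W.e b) := by
    intro a b
    have h1 : (principalQuandle W.f).op (W.e a) (W.e (S.invOp a b)) = W.e b := by
      rw [← hop, S.op_inv]
    have h2 := (principalQuandle W.f).inv_op (W.e a) (W.e (S.invOp a b))
    rw [h1] at h2
    exact h2.symm
  have hl' : (principalQuandle W.f).IsLatin := by
    intro a
    have heq : (fun b => (principalQuandle W.f).op b a)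
        = ⇑W.e ∘ (fun x => S.op x (W.e.symm a)) ∘ ⇑W.e.symm := by
      funext b
      simp only [Function.comp_apply]
      rw [hop, Equiv.apply_symm_apply, Equiv.apply_symm_apply]
    rw [heq]
    exact W.e.bijective.comp ((hl (W.e.symm a)).comp W.e.symm.bijective)
  have hdvd' : p ∣ Nat.card W.G := by
    rwa [← Nat.card_congr W.e]
  obtain ⟨Ag, ⟨hAsub, ⟨a0, ha0, b0, hb0, hab0⟩, hAmin⟩, k, hk⟩ :=
    main_G W.f hl' p hp hdvd'
  refine ⟨⇑W.e ⁻¹' Ag, ⟨⟨?_, ?_, ?_⟩, ?_, ?_⟩, k, ?_⟩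
  · exact ⟨W.e.symm a0, by simp only [Set.mem_preimage, Equiv.apply_symm_apply]; exact ha0⟩
  · intro a ha b hb
    simp only [Set.mem_preimage] at ha hb ⊢
    rw [hop]
    exact hAsub.2.1 _ ha _ hb
  · intro a ha b hb
    simp only [Set.mem_preimage] at ha hb ⊢
    rw [hinvOp]
    exact hAsub.2.2 _ ha _ hb
  · refine ⟨W.e.symm a0, ?_, W.e.symm b0, ?_, ?_⟩
    · simp only [Set.mem_preimage, Equiv.apply_symm_apply]; exact ha0
    · simp only [Set.mem_preimage, Equiv.apply_symm_apply]; exact hb0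
    · exact fun h => hab0 (by rw [← Equiv.apply_symm_apply W.e a0, h,
        Equiv.apply_symm_apply])
  · intro B hBsub hB
    have hB' : (principalQuandle W.f).IsSubquandle (⇑W.e '' B) := by
      obtain ⟨x, hx⟩ := hB.1
      refine ⟨⟨W.e x, x, hx, rfl⟩, ?_, ?_⟩
      · rintro _ ⟨x, hx, rfl⟩ _ ⟨y, hy, rfl⟩
        rw [← hop]
        exact ⟨_, hB.2.1 x hx y hy, rfl⟩
      · rintro _ ⟨x, hx, rfl⟩ _ ⟨y, hy, rfl⟩
        rw [← hinvOp]
        exact ⟨_, hB.2.2 x hx y hy, rfl⟩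
    have hsub' : ⇑W.e '' B ⊆ Ag := by
      rintro _ ⟨x, hx, rfl⟩
      exact hBsub hx
    rcases hAmin _ hsub' hB' with h | h
    · left
      intro x hx y hy
      exact W.e.injective (h _ ⟨x, hx, rfl⟩ _ ⟨y, hy, rfl⟩)
    · right
      rw [← Set.preimage_image_eq B W.e.injective, h]
  · have hcard : Nat.card (⇑W.e ⁻¹' Ag) = Nat.card Ag :=
      Nat.card_congr (Equiv.subtypeEquiv W.e (fun a => Iff.rfl))
    rw [hcard]
    exact hk
end
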